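/- Let f : ℝ^m → ℝ be continuously differentiable and weakly pairwise monotonic with respect to feature β over feature γ (β ≠ γ). Then Integrated Gradients with the zero baseline preserves average weak pairwise monotonicity: for every explicand x ∈ ℝ^m with x_β = x_γ > 0, one has (1/x_β) · IG_β(x, 0, f) ≥ (1/x_γ) · IG_γ(x, 0, f), i.e. IG_β(x, 0, f) ≥ IG_γ(x, 0, f). -/

import Mathlib

/-- The Integrated Gradients attribution of feature `i` at explicand `x` with baseline `x'`
for a model `f`: `IG_i(x, x', f) = (x_i − x'_i) · ∫_0^1 (∂f/∂x_i)(x' + t(x − x')) dt`. -/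
noncomputable def IG (m : ℕ) (f : (Fin m → ℝ) → ℝ) (x x' : Fin m → ℝ) (i : Fin m) : ℝ :=
  (x i - x' i) * ∫ t in (0:ℝ)..1,
    deriv (fun s : ℝ => f (Function.update (x' + t • (x - x')) i s)) ((x' + t • (x - x')) i)

lemma hasDerivAt_update_aux (m : ℕ) (y : Fin m → ℝ) (i : Fin m) (s : ℝ) :
    HasDerivAt (fun s : ℝ => Function.update y i s) (Pi.single i 1) s := by
  have heq : (fun s : ℝ => Function.update y i s)
      = fun s : ℝ => y + (s - y i) • (Pi.single i 1 : Fin m → ℝ) := by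
    funext s
    funext j
    by_cases h : j = i
    · subst h; simp [Function.update_self, Pi.single_apply]
    · simp [Function.update_of_ne h, Pi.single_apply, h]
  rw [heq]
  have h1 : HasDerivAt (fun s : ℝ => (s - y i)) 1 s := by
    simpa using (hasDerivAt_id s).sub_const (y i)
  have h2 := h1.smul_const (Pi.single i (1:ℝ) : Fin m → ℝ)
  simpa using h2.const_add y

lemma hasDerivAt_partial (m : ℕ) (f : (Fin m → ℝ) → ℝ) (hf : ContDiff ℝ 1 f)
    (y : Fin m → ℝ) (i : Fin m) :
    HasDerivAt (fun s : ℝ => f (Function.update y i s))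
      (fderiv ℝ f y (Pi.single i 1)) (y i) := by
  have hd : HasFDerivAt f (fderiv ℝ f y) (Function.update y i (y i)) := by
    rw [Function.update_eq_self]
    exact (hf.differentiable one_ne_zero y).hasFDerivAt
  have := hd.comp_hasDerivAt (y i) (hasDerivAt_update_aux m y i (y i))
  simpa [Function.comp_def] using this

lemma deriv_le_of_le {φ ψ : ℝ → ℝ} {a d e : ℝ}
    (hφ : HasDerivAt φ d a) (hψ : HasDerivAt ψ e a) (h0 : φ a = ψ a)
    (h : ∀ c : ℝ, 0 < c → φ (a + c) ≤ ψ (a + c)) : d ≤ e := by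
  have hsφ : Filter.Tendsto (slope φ a) (nhdsWithin a (Set.Ioi a)) (nhds d) :=
    ((hasDerivAt_iff_tendsto_slope.mp hφ).mono_left
      (nhdsWithin_mono a (fun z hz => ne_of_gt hz)))
  have hsψ : Filter.Tendsto (slope ψ a) (nhdsWithin a (Set.Ioi a)) (nhds e) :=
    ((hasDerivAt_iff_tendsto_slope.mp hψ).mono_left
      (nhdsWithin_mono a (fun z hz => ne_of_gt hz)))
  refine le_of_tendsto_of_tendsto hsφ hsψ ?_
  filter_upwards [self_mem_nhdsWithin] with z hz
  have hz' : 0 < z - a := sub_pos.mpr hz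
  have hle : φ z ≤ ψ z := by
    have := h (z - a) hz'
    rwa [add_sub_cancel] at this
  rw [slope_def_field, slope_def_field, div_eq_mul_inv, div_eq_mul_inv]
  have hnum : φ z - φ a ≤ ψ z - ψ a := by
    rw [h0]; linarith
  exact mul_le_mul_of_nonneg_right hnum (le_of_lt (inv_pos.mpr hz'))

theorem ig_preserves_average_weak_pairwise_monotonicity
    (m : ℕ) (f : (Fin m → ℝ) → ℝ) (β γ : Fin m) (hβγ : β ≠ γ)
    (hf : ContDiff ℝ 1 f)
    (hmono : ∀ (x : Fin m → ℝ) (c : ℝ), x β = x γ → 0 < c →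
      f (Function.update x γ (x γ + c)) ≤ f (Function.update x β (x β + c)))
    (x : Fin m → ℝ) (hx : x β = x γ) (hpos : 0 < x β) :
    (1 / x γ) * IG m f x 0 γ ≤ (1 / x β) * IG m f x 0 β := by
  have hposγ : 0 < x γ := hx ▸ hpos
  have hIG : ∀ i : Fin m, IG m f x 0 i
      = x i * ∫ t in (0:ℝ)..1, fderiv ℝ f (t • x) (Pi.single i 1) := by
    intro i
    unfold IG
    simp only [Pi.zero_apply, sub_zero, zero_add]
    congr 1
    apply intervalIntegral.integral_congr
    intro t _
    exact (hasDerivAt_partial m f hf (t • x) i).deriv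
  rw [hIG β, hIG γ]
  rw [one_div, one_div, ← mul_assoc, ← mul_assoc, inv_mul_cancel₀ (ne_of_gt hpos),
    inv_mul_cancel₀ (ne_of_gt hposγ), one_mul, one_mul]
  have hcont : Continuous (fderiv ℝ f) := hf.continuous_fderiv one_ne_zero
  have hci : ∀ i : Fin m, Continuous (fun t : ℝ => fderiv ℝ f (t • x) (Pi.single i 1)) := by
    intro i
    exact (ContinuousLinearMap.apply ℝ ℝ (Pi.single i 1)).continuous.comp
      (hcont.comp (continuous_id.smul continuous_const))
  apply intervalIntegral.integral_mono_on (by norm_num)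
    ((hci γ).intervalIntegrable 0 1) ((hci β).intervalIntegrable 0 1)
  intro t _
  set y := t • x with hy
  have hyβγ : y β = y γ := by simp [hy, hx]
  have hβ := hasDerivAt_partial m f hf y β
  rw [hyβγ] at hβ
  refine deriv_le_of_le (hasDerivAt_partial m f hf y γ) hβ ?_ ?_
  · have : Function.update y β (y γ) = y := by
      rw [← hyβγ]; exact Function.update_eq_self β y
    rw [Function.update_eq_self, this]
  · intro c hc
    have := hmono y c hyβγ hc
    rwa [hyβγ] at this
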